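/- Let N ≥ 1, s > 0, and let ν be a (signed) Radon measure on ℝ^N \ {0} with ∫ min{1,|x|²} d|ν|(x) < ∞ and |ν|(B(x,1)) = O(|x|^{-N-2s}) as |x| → ∞. Then there exists a constant C > 0 such that for all x ∈ ℝ^N with |x| ≥ 2, ∫_{|y|≥1} (1+|x+y|)^{-N-2s} d|ν|(y) ≤ C (1+|x|)^{-N-2s}. -/

import Mathlib

open MeasureTheory Metric
open scoped ENNReal NNReal

/-- Decay estimate for the tail integral `∫_{|y|≥1} (1+|x+y|)^{-N-2s} d|ν|(y)`.
The signed Radon measure `ν` is represented through its Jordan decomposition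
`ν = νp - νm` (with `νp ⟂ νm`), so that `|ν| = νp + νm`. -/
theorem stmt1 (N : ℕ) (hN : 1 ≤ N) (s : ℝ) (hs : 0 < s)
    (νp νm : Measure (EuclideanSpace ℝ (Fin N))) (hsing : νp ⟂ₘ νm)
    (hzero : (νp + νm) {0} = 0)
    (hM : ∫⁻ x, ENNReal.ofReal (min 1 (‖x‖ ^ 2)) ∂(νp + νm) < ⊤)
    (C₀ R₀ : ℝ) (hC₀ : 0 < C₀) (hR₀ : 0 < R₀)
    (hdecay : ∀ x : EuclideanSpace ℝ (Fin N), R₀ ≤ ‖x‖ →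
      (νp + νm) (ball x 1) ≤ ENNReal.ofReal (C₀ * ‖x‖ ^ (-(N : ℝ) - 2 * s))) :
    ∃ C > (0 : ℝ), ∀ x : EuclideanSpace ℝ (Fin N), 2 ≤ ‖x‖ →
      ∫⁻ y in {y : EuclideanSpace ℝ (Fin N) | 1 ≤ ‖y‖},
          ENNReal.ofReal ((1 + ‖x + y‖) ^ (-(N : ℝ) - 2 * s)) ∂(νp + νm)
        ≤ ENNReal.ofReal (C * (1 + ‖x‖) ^ (-(N : ℝ) - 2 * s)) := by
  classical
  set μ := νp + νm with hμdef
  set e : ℝ := -(N : ℝ) - 2 * s with he_def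
  have hN1 : (1 : ℝ) ≤ (N : ℝ) := by exact_mod_cast hN
  have he_neg : e < 0 := by simp only [he_def]; linarith
  have hNe : ((Module.finrank ℝ (EuclideanSpace ℝ (Fin N))) : ℝ) < -e := by
    rw [finrank_euclideanSpace_fin]
    simp only [he_def]; linarith
  -- the "mass" constant
  set M : ℝ≥0∞ := ∫⁻ x, ENNReal.ofReal (min 1 (‖x‖ ^ 2)) ∂μ with hMdef
  set S : Set (EuclideanSpace ℝ (Fin N)) := {y | 1 ≤ ‖y‖} with hSdef
  have hSmeas : MeasurableSet S := (isClosed_le continuous_const continuous_norm).measurableSet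
  have hSM : μ S ≤ M := by
    calc μ S = ∫⁻ _ in S, 1 ∂μ := (setLIntegral_one S).symm
      _ ≤ ∫⁻ y in S, ENNReal.ofReal (min 1 (‖y‖ ^ 2)) ∂μ := by
          refine setLIntegral_mono' hSmeas fun y hy => ?_
          have h1 : (1:ℝ) ≤ ‖y‖ ^ 2 := by
            have : (1:ℝ) ≤ ‖y‖ := hy
            nlinarith
          rw [min_eq_left h1]
          simp
      _ ≤ M := setLIntegral_le_lintegral _ _
  -- Japanese bracket integral
  set J : ℝ≥0∞ := ∫⁻ w : EuclideanSpace ℝ (Fin N), ENNReal.ofReal ((1 + ‖w‖) ^ e) ∂volume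
    with hJdef
  have hJ : J < ⊤ := by
    have := finite_integral_one_add_norm (E := EuclideanSpace ℝ (Fin N))
      (μ := volume) hNe
    simpa [hJdef, neg_neg] using this
  -- volume of unit ball
  set v : ℝ≥0∞ := volume (ball (0 : EuclideanSpace ℝ (Fin N)) 1) with hvdef
  have hv0 : v ≠ 0 := (measure_ball_pos _ _ one_pos).ne'
  have hvtop : v ≠ ⊤ := measure_ball_lt_top.ne
  set R₁ : ℝ := max 4 (2 * R₀ + 2) with hR₁def
  -- the ENNReal constant
  set K : ℝ≥0∞ :=
    M * ENNReal.ofReal ((1 + R₁) ^ (-e)) +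
      (ENNReal.ofReal ((2:ℝ) ^ (-e)) * M +
        v⁻¹ * (ENNReal.ofReal ((2:ℝ) ^ (-e)) * J * ENNReal.ofReal (C₀ * (8:ℝ) ^ (-e))))
    with hKdef
  have hKtop : K ≠ ⊤ := by
    refine ENNReal.add_ne_top.2 ⟨ENNReal.mul_ne_top hM.ne ENNReal.ofReal_ne_top,
      ENNReal.add_ne_top.2 ⟨ENNReal.mul_ne_top ENNReal.ofReal_ne_top hM.ne,
        ENNReal.mul_ne_top (ENNReal.inv_ne_top.2 hv0)
          (ENNReal.mul_ne_top (ENNReal.mul_ne_top ENNReal.ofReal_ne_top hJ.ne)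
            ENNReal.ofReal_ne_top)⟩⟩
  -- key estimate in ENNReal form
  have key : ∀ x : EuclideanSpace ℝ (Fin N), 2 ≤ ‖x‖ →
      ∫⁻ y in S, ENNReal.ofReal ((1 + ‖x + y‖) ^ e) ∂μ
        ≤ K * ENNReal.ofReal ((1 + ‖x‖) ^ e) := by
    intro x hx
    set q : ℝ≥0∞ := ENNReal.ofReal ((1 + ‖x‖) ^ e) with hqdef
    by_cases hcase : ‖x‖ < R₁
    · -- bounded regime
      have h1 : ∫⁻ y in S, ENNReal.ofReal ((1 + ‖x + y‖) ^ e) ∂μ ≤ M := by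
        calc ∫⁻ y in S, ENNReal.ofReal ((1 + ‖x + y‖) ^ e) ∂μ
            ≤ ∫⁻ _ in S, 1 ∂μ := by
              refine setLIntegral_mono' hSmeas fun y _ => ?_
              rw [show (1:ℝ≥0∞) = ENNReal.ofReal 1 by simp]
              refine ENNReal.ofReal_le_ofReal ?_
              have hb : (1:ℝ) ≤ 1 + ‖x + y‖ := by linarith [norm_nonneg (x + y)]
              calc (1 + ‖x + y‖) ^ e ≤ 1 ^ e :=
                    Real.rpow_le_rpow_of_nonpos one_pos hb he_neg.le
                _ = 1 := Real.one_rpow e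
          _ = μ S := setLIntegral_one S
          _ ≤ M := hSM
      have h2 : M ≤ M * ENNReal.ofReal ((1 + R₁) ^ (-e)) * q := by
        have hq1 : (1:ℝ≥0∞) ≤ ENNReal.ofReal ((1 + R₁) ^ (-e)) * q := by
          rw [hqdef, ← ENNReal.ofReal_mul (by positivity), ← ENNReal.ofReal_one]
          refine ENNReal.ofReal_le_ofReal ?_
          have hRpos : (0:ℝ) < 1 + R₁ := by
            have : (4:ℝ) ≤ R₁ := le_max_left _ _
            linarith
          have hle : (1:ℝ) + ‖x‖ ≤ 1 + R₁ := by linarith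
          have h3 : (1 + R₁) ^ e ≤ (1 + ‖x‖) ^ e :=
            Real.rpow_le_rpow_of_nonpos (by positivity) hle he_neg.le
          calc (1:ℝ) = (1 + R₁) ^ (-e) * (1 + R₁) ^ e := by
                rw [← Real.rpow_add hRpos]; simp
            _ ≤ (1 + R₁) ^ (-e) * (1 + ‖x‖) ^ e := by
                refine mul_le_mul_of_nonneg_left h3 ?_
                positivity
        calc M = M * 1 := (mul_one M).symm
          _ ≤ M * (ENNReal.ofReal ((1 + R₁) ^ (-e)) * q) := mul_le_mul_right hq1 M
          _ = M * ENNReal.ofReal ((1 + R₁) ^ (-e)) * q := (mul_assoc _ _ _).symm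
      refine le_trans (h1.trans h2) ?_
      exact mul_le_mul_left le_self_add q
    · -- far regime : ‖x‖ ≥ R₁
      push_neg at hcase
      have hx4 : (4:ℝ) ≤ ‖x‖ := le_trans (le_max_left _ _) hcase
      have hxR0 : 2 * R₀ + 2 ≤ ‖x‖ := le_trans (le_max_right _ _) hcase
      have hxpos : (0:ℝ) < ‖x‖ := by linarith
      have hdiv : ∀ a c : ℝ, 0 < a → 0 < c → (a / c) ^ e = c ^ (-e) * a ^ e := by
        intro a c ha hc
        rw [Real.div_rpow ha.le hc.le, Real.rpow_neg hc.le, div_eq_mul_inv, mul_comm]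
      -- the function
      set f : EuclideanSpace ℝ (Fin N) → ℝ≥0∞ :=
        fun y => ENNReal.ofReal ((1 + ‖x + y‖) ^ e) with hfdef
      have hcont : Continuous fun y : EuclideanSpace ℝ (Fin N) => (1 + ‖x + y‖) ^ e := by
        refine Continuous.rpow_const ?_ fun y => Or.inl (by positivity)
        exact continuous_const.add ((continuous_const.add continuous_id).norm)
      have hfm : Measurable f := (ENNReal.continuous_ofReal.comp hcont).measurable
      -- the two regions
      set A : Set (EuclideanSpace ℝ (Fin N)) := {y | ‖x‖ / 2 ≤ ‖x + y‖} with hAdef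
      have hAmeas : MeasurableSet A :=
        (isClosed_le continuous_const ((continuous_const.add continuous_id).norm)).measurableSet
      set Bs : Set (EuclideanSpace ℝ (Fin N)) := ball (-x) (‖x‖ / 2) with hBdef
      have hmemBs : ∀ y, y ∈ Bs ↔ ‖x + y‖ < ‖x‖ / 2 := by
        intro y
        rw [hBdef, mem_ball, dist_eq_norm, sub_neg_eq_add, add_comm]
      have hBsS : Bs ⊆ S := by
        intro y hy
        rw [hmemBs] at hy
        have h1 : ‖x‖ ≤ ‖x + y‖ + ‖y‖ := by
          calc ‖x‖ = ‖(x + y) - y‖ := by rw [add_sub_cancel_right]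
            _ ≤ ‖x + y‖ + ‖y‖ := norm_sub_le _ _
        show (1:ℝ) ≤ ‖y‖
        linarith
      have hSsub : S ⊆ (S ∩ A) ∪ Bs := by
        intro y hy
        by_cases hc : ‖x‖ / 2 ≤ ‖x + y‖
        · exact Or.inl ⟨hy, hc⟩
        · exact Or.inr ((hmemBs y).2 (lt_of_not_ge hc))
      -- the A part
      have hApart : ∫⁻ y in S ∩ A, f y ∂μ ≤ ENNReal.ofReal ((2:ℝ) ^ (-e)) * M * q := by
        have hb : ∀ y ∈ S ∩ A, f y ≤ ENNReal.ofReal ((2:ℝ) ^ (-e) * (1 + ‖x‖) ^ e) := by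
          intro y hy
          refine ENNReal.ofReal_le_ofReal ?_
          have h1 : (1 + ‖x‖) / 2 ≤ 1 + ‖x + y‖ := by
            have := hy.2
            simp only [hAdef, Set.mem_setOf_eq] at this
            linarith
          calc (1 + ‖x + y‖) ^ e ≤ ((1 + ‖x‖) / 2) ^ e :=
                Real.rpow_le_rpow_of_nonpos (by positivity) h1 he_neg.le
            _ = (2:ℝ) ^ (-e) * (1 + ‖x‖) ^ e := hdiv _ _ (by positivity) (by norm_num)
        calc ∫⁻ y in S ∩ A, f y ∂μ
            ≤ ∫⁻ _ in S ∩ A, ENNReal.ofReal ((2:ℝ) ^ (-e) * (1 + ‖x‖) ^ e) ∂μ :=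
              setLIntegral_mono' (hSmeas.inter hAmeas) hb
          _ = ENNReal.ofReal ((2:ℝ) ^ (-e) * (1 + ‖x‖) ^ e) * μ (S ∩ A) :=
              setLIntegral_const _ _
          _ ≤ ENNReal.ofReal ((2:ℝ) ^ (-e) * (1 + ‖x‖) ^ e) * M :=
              mul_le_mul_right (le_trans (measure_mono Set.inter_subset_left) hSM) _
          _ = ENNReal.ofReal ((2:ℝ) ^ (-e)) * M * q := by
              rw [ENNReal.ofReal_mul (by positivity)]
              ring
      -- the B part
      haveI hfin : IsFiniteMeasure (μ.restrict Bs) := by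
        constructor
        rw [Measure.restrict_apply_univ]
        exact lt_of_le_of_lt (le_trans (measure_mono hBsS) hSM) hM
      set δ : ℝ≥0∞ := ENNReal.ofReal (C₀ * (‖x‖ / 2 - 1) ^ e) with hδdef
      set G : EuclideanSpace ℝ (Fin N) × EuclideanSpace ℝ (Fin N) → ℝ≥0∞ :=
        fun p => if ‖p.2 - (x + p.1)‖ < 1 then f p.1 else 0 with hGdef
      have hGmeas : Measurable G := by
        refine Measurable.ite ?_ (hfm.comp measurable_fst) measurable_const
        exact (isOpen_lt ((continuous_snd.sub (continuous_const.add continuous_fst)).norm)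
          continuous_const).measurableSet
      have hstep1 : ∀ y, (∫⁻ w, G (y, w) ∂(volume : Measure (EuclideanSpace ℝ (Fin N))))
          = f y * v := by
        intro y
        have heq : (fun w => G (y, w))
            = (ball (x + y) 1).indicator (fun _ => f y) := by
          funext w
          by_cases hc : ‖w - (x + y)‖ < 1 <;>
            simp [hGdef, Set.indicator, mem_ball, dist_eq_norm, hc]
        rw [heq, lintegral_indicator_const measurableSet_ball,
          Measure.addHaar_ball_center]
      have hstep4 : ∀ w : EuclideanSpace ℝ (Fin N), (∫⁻ y in Bs, G (y, w) ∂μ)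
          ≤ ENNReal.ofReal ((2:ℝ) ^ (-e) * (1 + ‖w‖) ^ e) * δ := by
        intro w
        have hpt : ∀ y, G (y, w) ≤ (ball (w - x) 1).indicator
            (fun _ => ENNReal.ofReal ((2:ℝ) ^ (-e) * (1 + ‖w‖) ^ e)) y := by
          intro y
          by_cases hyw : ‖w - (x + y)‖ < 1
          · have hmem : y ∈ ball (w - x) 1 := by
              rw [mem_ball, dist_eq_norm]
              have h : y - (w - x) = -(w - (x + y)) := by abel
              rw [h, norm_neg]
              exact hyw
            rw [Set.indicator_of_mem hmem]
            simp only [hGdef, if_pos hyw, hfdef]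
            refine ENNReal.ofReal_le_ofReal ?_
            have h1 : ‖w‖ ≤ 1 + ‖x + y‖ := by
              have h2 : ‖w‖ - ‖x + y‖ ≤ ‖w - (x + y)‖ := norm_sub_norm_le _ _
              linarith
            have h2 : (1 + ‖w‖) / 2 ≤ 1 + ‖x + y‖ := by
              have := norm_nonneg (x + y)
              linarith
            calc (1 + ‖x + y‖) ^ e ≤ ((1 + ‖w‖) / 2) ^ e :=
                  Real.rpow_le_rpow_of_nonpos (by positivity) h2 he_neg.le
              _ = (2:ℝ) ^ (-e) * (1 + ‖w‖) ^ e := hdiv _ _ (by positivity) (by norm_num)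
          · simp only [hGdef, if_neg hyw]
            exact zero_le
        have hint : μ (ball (w - x) 1 ∩ Bs) ≤ δ := by
          rcases Set.eq_empty_or_nonempty (ball (w - x) 1 ∩ Bs) with hemp | ⟨y, hy1, hy2⟩
          · rw [hemp]; simp
          · rw [mem_ball, dist_eq_norm] at hy1
            rw [hmemBs] at hy2
            have hyx : ‖x‖ / 2 ≤ ‖y‖ := by
              have h1 : ‖x‖ ≤ ‖x + y‖ + ‖y‖ := by
                calc ‖x‖ = ‖(x + y) - y‖ := by rw [add_sub_cancel_right]
                  _ ≤ ‖x + y‖ + ‖y‖ := norm_sub_le _ _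
              linarith
            have hwx : ‖x‖ / 2 - 1 ≤ ‖w - x‖ := by
              have h2 : ‖y‖ - ‖w - x‖ ≤ ‖y - (w - x)‖ := norm_sub_norm_le _ _
              linarith
            have hwR : R₀ ≤ ‖w - x‖ := by linarith
            calc μ (ball (w - x) 1 ∩ Bs) ≤ μ (ball (w - x) 1) :=
                  measure_mono Set.inter_subset_left
              _ ≤ ENNReal.ofReal (C₀ * ‖w - x‖ ^ e) := hdecay _ hwR
              _ ≤ δ := by
                  refine ENNReal.ofReal_le_ofReal ?_
                  refine mul_le_mul_of_nonneg_left ?_ hC₀.le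
                  exact Real.rpow_le_rpow_of_nonpos (by linarith) hwx he_neg.le
        calc ∫⁻ y in Bs, G (y, w) ∂μ
            ≤ ∫⁻ y in Bs, (ball (w - x) 1).indicator
                (fun _ => ENNReal.ofReal ((2:ℝ) ^ (-e) * (1 + ‖w‖) ^ e)) y ∂μ :=
              lintegral_mono hpt
          _ = ENNReal.ofReal ((2:ℝ) ^ (-e) * (1 + ‖w‖) ^ e) * (μ.restrict Bs) (ball (w - x) 1) :=
              lintegral_indicator_const measurableSet_ball _
          _ = ENNReal.ofReal ((2:ℝ) ^ (-e) * (1 + ‖w‖) ^ e) * μ (ball (w - x) 1 ∩ Bs) := by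
              rw [Measure.restrict_apply measurableSet_ball]
          _ ≤ _ := mul_le_mul_right hint _
      have hBpart : ∫⁻ y in Bs, f y ∂μ
          ≤ v⁻¹ * (ENNReal.ofReal ((2:ℝ) ^ (-e)) * J * δ) := by
        have hswap : ∫⁻ y in Bs, ∫⁻ w, G (y, w) ∂volume ∂μ
            = ∫⁻ w, ∫⁻ y in Bs, G (y, w) ∂μ ∂(volume : Measure (EuclideanSpace ℝ (Fin N))) :=
          lintegral_lintegral_swap hGmeas.aemeasurable
        have hvT : v * ∫⁻ y in Bs, f y ∂μ
            ≤ ENNReal.ofReal ((2:ℝ) ^ (-e)) * J * δ := by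
          calc v * ∫⁻ y in Bs, f y ∂μ = ∫⁻ y in Bs, f y * v ∂μ := by
                rw [lintegral_mul_const' v _ hvtop, mul_comm]
            _ = ∫⁻ y in Bs, ∫⁻ w, G (y, w) ∂volume ∂μ := by
                refine lintegral_congr fun y => ?_
                rw [hstep1 y]
            _ = ∫⁻ w, ∫⁻ y in Bs, G (y, w) ∂μ ∂volume := hswap
            _ ≤ ∫⁻ w, ENNReal.ofReal ((2:ℝ) ^ (-e) * (1 + ‖w‖) ^ e) * δ ∂volume :=
                lintegral_mono hstep4
            _ = ENNReal.ofReal ((2:ℝ) ^ (-e)) * J * δ := by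
                simp_rw [ENNReal.ofReal_mul (p := (2:ℝ) ^ (-e)) (by positivity), mul_assoc]
                rw [lintegral_const_mul' _ _ ENNReal.ofReal_ne_top,
                  lintegral_mul_const' δ _ ENNReal.ofReal_ne_top]
        have h := mul_le_mul_right hvT v⁻¹
        rwa [← mul_assoc, ENNReal.inv_mul_cancel hv0 hvtop, one_mul] at h
      have hδq : δ ≤ ENNReal.ofReal (C₀ * (8:ℝ) ^ (-e)) * q := by
        rw [hδdef, hqdef, ← ENNReal.ofReal_mul (by positivity)]
        refine ENNReal.ofReal_le_ofReal ?_
        have h1 : (1 + ‖x‖) / 8 ≤ ‖x‖ / 2 - 1 := by linarith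
        have h2 : (‖x‖ / 2 - 1) ^ e ≤ ((1 + ‖x‖) / 8) ^ e :=
          Real.rpow_le_rpow_of_nonpos (by positivity) h1 he_neg.le
        have h3 : ((1 + ‖x‖) / 8) ^ e = (8:ℝ) ^ (-e) * (1 + ‖x‖) ^ e :=
          hdiv _ _ (by positivity) (by norm_num)
        calc C₀ * (‖x‖ / 2 - 1) ^ e ≤ C₀ * ((8:ℝ) ^ (-e) * (1 + ‖x‖) ^ e) := by
              rw [← h3]; exact mul_le_mul_of_nonneg_left h2 hC₀.le
          _ = C₀ * (8:ℝ) ^ (-e) * (1 + ‖x‖) ^ e := by ring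
      -- combine
      calc ∫⁻ y in S, f y ∂μ ≤ ∫⁻ y in (S ∩ A) ∪ Bs, f y ∂μ := lintegral_mono_set hSsub
        _ ≤ ∫⁻ y in S ∩ A, f y ∂μ + ∫⁻ y in Bs, f y ∂μ := lintegral_union_le _ _ _
        _ ≤ ENNReal.ofReal ((2:ℝ) ^ (-e)) * M * q
            + v⁻¹ * (ENNReal.ofReal ((2:ℝ) ^ (-e)) * J * δ) := add_le_add hApart hBpart
        _ ≤ ENNReal.ofReal ((2:ℝ) ^ (-e)) * M * q
            + v⁻¹ * (ENNReal.ofReal ((2:ℝ) ^ (-e)) * J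
                * (ENNReal.ofReal (C₀ * (8:ℝ) ^ (-e)) * q)) := by
            gcongr
        _ = (ENNReal.ofReal ((2:ℝ) ^ (-e)) * M
            + v⁻¹ * (ENNReal.ofReal ((2:ℝ) ^ (-e)) * J * ENNReal.ofReal (C₀ * (8:ℝ) ^ (-e)))) * q := by
            ring
        _ ≤ K * q := by
            refine mul_le_mul_left ?_ q
            rw [hKdef]
            exact le_add_self
  -- conclude
  refine ⟨K.toReal + 1, by positivity, fun x hx => ?_⟩
  have h1 := key x hx
  have h2 : K ≤ ENNReal.ofReal (K.toReal + 1) := by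
    rw [ENNReal.ofReal_add ENNReal.toReal_nonneg zero_le_one, ENNReal.ofReal_toReal hKtop]
    simp
  calc ∫⁻ y in S, ENNReal.ofReal ((1 + ‖x + y‖) ^ e) ∂μ
      ≤ K * ENNReal.ofReal ((1 + ‖x‖) ^ e) := h1
    _ ≤ ENNReal.ofReal (K.toReal + 1) * ENNReal.ofReal ((1 + ‖x‖) ^ e) :=
        mul_le_mul_left h2 _
    _ = ENNReal.ofReal ((K.toReal + 1) * (1 + ‖x‖) ^ e) :=
        (ENNReal.ofReal_mul (by positivity)).symm
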